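/- Let T be a tolerance (reflexive, symmetric relation) on a set S and let δ(S) = {⋃H : H ⊆ 𝒯} be the collection of definable objects. Then ∅ ∈ δ(S) and S ∈ δ(S), and δ(S) is closed under arbitrary unions and arbitrary intersections; hence δ(S) is a complete ring of subsets of S (an Alexandrov topology on S). -/
import Mathlib


/-- A block of a tolerance `T`: a maximal subset `B` with `B × B ⊆ T`. -/
def IsBlock {S : Type*} (T : S → S → Prop) (B : Set S) : Prop :=
  (∀ a ∈ B, ∀ b ∈ B, T a b) ∧
    ∀ C : Set S, B ⊆ C → (∀ a ∈ C, ∀ b ∈ C, T a b) → C = B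

/-- Squeezed blocks: intersections of nonempty families of blocks. -/
def sqBlocks {S : Type*} (T : S → S → Prop) : Set (Set S) :=
  {A | ∃ Γ : Set (Set S), Γ.Nonempty ∧ (∀ B ∈ Γ, IsBlock T B) ∧ A = ⋂₀ Γ}

/-- The definable objects: unions of families of squeezed blocks. -/
def defObj {S : Type*} (T : S → S → Prop) : Set (Set S) :=
  {U | ∃ H ⊆ sqBlocks T, U = ⋃₀ H}

/-- Every element lies in some block (Zorn's lemma). -/
lemma exists_block_mem {S : Type*} (T : S → S → Prop)
    (hrefl : ∀ a, T a a) (a : S) : ∃ B, IsBlock T B ∧ a ∈ B := by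
  obtain ⟨m, ham, hmax⟩ := zorn_subset_nonempty
      {C : Set S | ∀ x ∈ C, ∀ y ∈ C, T x y}
      (fun c hc hchain hne => by
        refine ⟨⋃₀ c, ?_, fun s hs => Set.subset_sUnion_of_mem hs⟩
        rintro x ⟨c1, hc1, hx1⟩ y ⟨c2, hc2, hy2⟩
        rcases hchain.total hc1 hc2 with h | h
        · exact hc hc2 x (h hx1) y hy2
        · exact hc hc1 x hx1 y (h hy2))
      {a} (by intro x hx y hy
              rw [Set.mem_singleton_iff] at hx hy
              rw [hx, hy]; exact hrefl a)
  exact ⟨m, ⟨hmax.prop, fun C hsub hC => (hmax.eq_of_subset hC hsub).symm⟩,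
    ham rfl⟩

/-- For a tolerance `T` on `S`, the collection of definable objects `δ(S)` contains
`∅` and `S` and is closed under arbitrary unions and arbitrary intersections:
it is a complete ring of subsets of `S` (an Alexandrov topology). -/
theorem defObj_complete_ring {S : Type*} (T : S → S → Prop)
    (hrefl : ∀ a, T a a) (hsymm : ∀ a b, T a b → T b a) :
    ∅ ∈ defObj T ∧ Set.univ ∈ defObj T ∧
    (∀ F ⊆ defObj T, ⋃₀ F ∈ defObj T) ∧
    (∀ F : Set (Set S), F ⊆ defObj T → ⋂₀ F ∈ defObj T) := by
  -- key: any set expressible pointwise by squeezed blocks is definable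
  have key : ∀ U : Set S, (∀ x ∈ U, ∃ A ∈ sqBlocks T, x ∈ A ∧ A ⊆ U) →
      U ∈ defObj T := by
    intro U hU
    refine ⟨{A | A ∈ sqBlocks T ∧ A ⊆ U}, fun A hA => hA.1, ?_⟩
    apply Set.Subset.antisymm
    · intro x hx
      obtain ⟨A, hA, hxA, hAU⟩ := hU x hx
      exact ⟨A, ⟨hA, hAU⟩, hxA⟩
    · rintro x ⟨A, ⟨_, hAU⟩, hxA⟩
      exact hAU hxA
  refine ⟨⟨∅, by simp, by simp⟩, ?_, ?_, ?_⟩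
  · apply key
    intro x _
    obtain ⟨B, hB, hxB⟩ := exists_block_mem T hrefl x
    exact ⟨B, ⟨{B}, ⟨B, rfl⟩, by rintro C rfl; exact hB, by simp⟩,
      by simpa using hxB, Set.subset_univ _⟩
  · intro F hF
    apply key
    rintro x ⟨U, hUF, hxU⟩
    obtain ⟨H, hH, rfl⟩ := hF hUF
    obtain ⟨A, hAH, hxA⟩ := hxU
    exact ⟨A, hH hAH, hxA, Set.subset_sUnion_of_mem hAH |>.trans
      (Set.subset_sUnion_of_mem hUF)⟩
  · intro F hF
    rcases F.eq_empty_or_nonempty with rfl | hFne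
    · simp only [Set.sInter_empty]
      apply key
      intro x _
      obtain ⟨B, hB, hxB⟩ := exists_block_mem T hrefl x
      exact ⟨B, ⟨{B}, ⟨B, rfl⟩, by rintro C rfl; exact hB, by simp⟩,
        by simpa using hxB, Set.subset_univ _⟩
    · apply key
      intro x hx
      -- for each U ∈ F, choose a family of blocks Γ_U with x ∈ ⋂₀ Γ_U ⊆ U
      have hch : ∀ U ∈ F, ∃ Γ : Set (Set S), Γ.Nonempty ∧
          (∀ B ∈ Γ, IsBlock T B) ∧ x ∈ ⋂₀ Γ ∧ ⋂₀ Γ ⊆ U := by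
        intro U hU
        have hxU : x ∈ U := hx U hU
        obtain ⟨H, hH, rfl⟩ := hF hU
        obtain ⟨A, hAH, hxA⟩ := hxU
        obtain ⟨Γ, hΓne, hΓbl, rfl⟩ := hH hAH
        exact ⟨Γ, hΓne, hΓbl, hxA, Set.subset_sUnion_of_mem hAH⟩
      choose Γ hΓne hΓbl hxΓ hΓsub using hch
      refine ⟨⋂₀ (⋃ U, ⋃ hU : U ∈ F, Γ U hU), ?_, ?_, ?_⟩
      · refine ⟨⋃ U, ⋃ hU : U ∈ F, Γ U hU, ?_, ?_, rfl⟩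
        · obtain ⟨U, hU⟩ := hFne
          obtain ⟨B, hB⟩ := hΓne U hU
          exact ⟨B, Set.mem_iUnion.2 ⟨U, Set.mem_iUnion.2 ⟨hU, hB⟩⟩⟩
        · intro B hB
          simp only [Set.mem_iUnion] at hB
          obtain ⟨U, hU, hBU⟩ := hB
          exact hΓbl U hU B hBU
      · intro B hB
        simp only [Set.mem_iUnion] at hB
        obtain ⟨U, hU, hBU⟩ := hB
        exact hxΓ U hU B hBU
      · intro y hy U hU
        apply hΓsub U hU
        intro B hB
        exact hy B (Set.mem_iUnion.2 ⟨U, Set.mem_iUnion.2 ⟨hU, hB⟩⟩)
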